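/- Let λ = (λ_k) be the nondecreasing sequence of Dirichlet Laplacian eigenvalues on the unit square (0,1)², i.e. the multiset {π²(m² + n²) : m, n ∈ ℕ*} arranged in nondecreasing order. For every N ∈ ℕ* there exists k(N) ∈ ℕ* such that the eigenvalue λ_{k(N)} has multiplicity exactly N, i.e. #{ℓ : λ_ℓ = λ_{k(N)}} = N. -/

import Mathlib

open Real

private def fp (p : ℤ × ℤ) : ℤ × ℤ := (2*p.1 - p.2, p.1 + 2*p.2)
private def fm (p : ℤ × ℤ) : ℤ × ℤ := (2*p.1 + p.2, 2*p.2 - p.1)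

private def Rs (k : ℕ) : Set (ℤ × ℤ) := {p | p.1^2 + p.2^2 = 5^k}

private lemma circle_finite (c : ℤ) : {p : ℤ × ℤ | p.1^2 + p.2^2 = c}.Finite := by
  apply Set.Finite.subset ((Set.finite_Icc (-(c+1)) (c+1)).prod (Set.finite_Icc (-(c+1)) (c+1)))
  rintro ⟨x, y⟩ h
  simp only [Set.mem_setOf_eq] at h
  have hx2 : x^2 ≤ c := by nlinarith [sq_nonneg y]
  have hy2 : y^2 ≤ c := by nlinarith [sq_nonneg x]
  constructor <;> simp only [Set.mem_Icc] <;> constructor <;>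
    nlinarith [sq_nonneg (x-1), sq_nonneg (x+1), sq_nonneg (y-1), sq_nonneg (y+1)]

private lemma Rs_finite (k : ℕ) : (Rs k).Finite := circle_finite _

private lemma fp_inj : Function.Injective fp := by
  rintro ⟨a,b⟩ ⟨c,d⟩ h
  simp only [fp, Prod.mk.injEq] at h
  obtain ⟨h1, h2⟩ := h
  ext <;> dsimp <;> omega

private lemma fm_inj : Function.Injective fm := by
  rintro ⟨a,b⟩ ⟨c,d⟩ h
  simp only [fm, Prod.mk.injEq] at h
  obtain ⟨h1, h2⟩ := h
  ext <;> dsimp <;> omega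

private lemma fp_image (k : ℕ) :
    fp '' Rs k = {p : ℤ × ℤ | p.1^2 + p.2^2 = 5^(k+1) ∧ (5:ℤ) ∣ 2*p.1 + p.2} := by
  ext ⟨m, n⟩
  simp only [Set.mem_image, Set.mem_setOf_eq]
  constructor
  · rintro ⟨⟨a,b⟩, ha, heq⟩
    simp only [Rs, Set.mem_setOf_eq] at ha
    simp only [fp, Prod.mk.injEq] at heq
    obtain ⟨h1, h2⟩ := heq
    subst h1; subst h2
    refine ⟨by linear_combination 5 * ha, ⟨a, by ring⟩⟩
  · rintro ⟨h1, ⟨c, hc⟩⟩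
    have hn : n = 5*c - 2*m := by omega
    subst hn
    refine ⟨(c, 2*c - m), ?_, ?_⟩
    · simp only [Rs, Set.mem_setOf_eq]
      have h25 : (25:ℤ) * (c^2 + (2*c - m)^2) = 25 * 5^k := by linear_combination 5 * h1
      have : (25:ℤ) ≠ 0 := by norm_num
      exact mul_left_cancel₀ this h25
    · simp only [fp, Prod.mk.injEq]
      constructor <;> ring

private lemma fm_image (k : ℕ) :
    fm '' Rs k = {p : ℤ × ℤ | p.1^2 + p.2^2 = 5^(k+1) ∧ (5:ℤ) ∣ 2*p.1 - p.2} := by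
  ext ⟨m, n⟩
  simp only [Set.mem_image, Set.mem_setOf_eq]
  constructor
  · rintro ⟨⟨a,b⟩, ha, heq⟩
    simp only [Rs, Set.mem_setOf_eq] at ha
    simp only [fm, Prod.mk.injEq] at heq
    obtain ⟨h1, h2⟩ := heq
    subst h1; subst h2
    refine ⟨by linear_combination 5 * ha, ⟨a, by ring⟩⟩
  · rintro ⟨h1, ⟨c, hc⟩⟩
    have hn : n = 2*m - 5*c := by omega
    subst hn
    refine ⟨(c, m - 2*c), ?_, ?_⟩
    · simp only [Rs, Set.mem_setOf_eq]
      have h25 : (25:ℤ) * (c^2 + (m - 2*c)^2) = 25 * 5^k := by linear_combination 5 * h1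
      have : (25:ℤ) ≠ 0 := by norm_num
      exact mul_left_cancel₀ this h25
    · simp only [fm, Prod.mk.injEq]
      constructor <;> ring

private lemma Rs_union (k : ℕ) : Rs (k+1) = fp '' Rs k ∪ fm '' Rs k := by
  rw [fp_image, fm_image]
  ext ⟨m, n⟩
  simp only [Rs, Set.mem_setOf_eq, Set.mem_union]
  constructor
  · intro h
    have hd : (5:ℤ) ∣ (2*m + n) * (2*m - n) := ⟨4*5^k - n^2, by linear_combination 4 * h⟩
    have h5 : Prime (5:ℤ) := by norm_num
    rcases h5.dvd_mul.mp hd with hdd | hdd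
    · exact Or.inl ⟨h, hdd⟩
    · exact Or.inr ⟨h, hdd⟩
  · rintro (⟨h, _⟩ | ⟨h, _⟩) <;> exact h

private lemma Rs_inter_succ (k : ℕ) :
    (fp '' Rs (k+1)) ∩ (fm '' Rs (k+1)) = (fun p : ℤ × ℤ => (5*p.1, 5*p.2)) '' Rs k := by
  rw [fp_image, fm_image]
  ext ⟨m, n⟩
  simp only [Set.mem_inter_iff, Set.mem_setOf_eq, Set.mem_image]
  constructor
  · rintro ⟨⟨h1, hd1⟩, ⟨_, hd2⟩⟩
    have hm : (5:ℤ) ∣ m := by omega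
    have hn : (5:ℤ) ∣ n := by omega
    obtain ⟨c, rfl⟩ := hm
    obtain ⟨d, rfl⟩ := hn
    refine ⟨(c, d), ?_, by simp [mul_comm]⟩
    simp only [Rs, Set.mem_setOf_eq]
    have h25 : (25:ℤ) * (c^2 + d^2) = 25 * 5^k := by linear_combination h1
    have : (25:ℤ) ≠ 0 := by norm_num
    exact mul_left_cancel₀ this h25
  · rintro ⟨⟨c, d⟩, hcd, heq⟩
    simp only [Rs, Set.mem_setOf_eq] at hcd
    simp only [Prod.mk.injEq] at heq
    obtain ⟨h1, h2⟩ := heq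
    subst h1; subst h2
    exact ⟨⟨by linear_combination 25 * hcd, ⟨2*c + d, by ring⟩⟩,
           ⟨by linear_combination 25 * hcd, ⟨2*c - d, by ring⟩⟩⟩

private lemma Rs_inter_zero : (fp '' Rs 0) ∩ (fm '' Rs 0) = ∅ := by
  rw [fp_image, fm_image]
  ext ⟨m, n⟩
  simp only [Set.mem_inter_iff, Set.mem_setOf_eq, Set.mem_empty_iff_false, iff_false]
  rintro ⟨⟨h1, hd1⟩, ⟨-, hd2⟩⟩
  have hm : (5:ℤ) ∣ m := by omega
  have hn : (5:ℤ) ∣ n := by omega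
  obtain ⟨c, rfl⟩ := hm
  obtain ⟨d, rfl⟩ := hn
  have h5 : (25:ℤ) ∣ 5 := ⟨c^2 + d^2, by linear_combination -h1⟩
  norm_num at h5

private lemma ncard_Rs_zero : (Rs 0).ncard = 4 := by
  have : Rs 0 = ↑({((1:ℤ),(0:ℤ)), (-1,0), (0,1), (0,-1)} : Finset (ℤ × ℤ)) := by
    ext ⟨m, n⟩
    simp only [Rs, Set.mem_setOf_eq, pow_zero, Finset.coe_insert, Set.mem_insert_iff,
      Finset.coe_singleton, Set.mem_singleton_iff, Prod.mk.injEq]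
    constructor
    · intro h
      have hm1 : -1 ≤ m := by nlinarith [sq_nonneg n, sq_nonneg (m+1)]
      have hm2 : m ≤ 1 := by nlinarith [sq_nonneg n, sq_nonneg (m-1)]
      have hn1 : -1 ≤ n := by nlinarith [sq_nonneg m, sq_nonneg (n+1)]
      have hn2 : n ≤ 1 := by nlinarith [sq_nonneg m, sq_nonneg (n-1)]
      interval_cases m <;> interval_cases n <;> simp_all
    · rintro (⟨rfl, rfl⟩ | ⟨rfl, rfl⟩ | ⟨rfl, rfl⟩ | ⟨rfl, rfl⟩) <;> norm_num
  rw [this, Set.ncard_coe_finset]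
  decide

private lemma ncard_Rs : ∀ k, (Rs k).ncard = 4 * (k + 1) := by
  have key : ∀ k, (Rs k).ncard = 4 * (k + 1) ∧ (Rs (k+1)).ncard = 4 * (k + 2) := by
    intro k
    induction k with
    | zero =>
      refine ⟨by simpa using ncard_Rs_zero, ?_⟩
      rw [Rs_union 0]
      have h := Set.ncard_union_add_ncard_inter (fp '' Rs 0) (fm '' Rs 0)
        ((Rs_finite 0).image _) ((Rs_finite 0).image _)
      rw [Rs_inter_zero] at h
      simp only [Set.ncard_empty, add_zero] at h
      rw [h, Set.ncard_image_of_injective _ fp_inj, Set.ncard_image_of_injective _ fm_inj,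
        ncard_Rs_zero]
    | succ k ih =>
      refine ⟨ih.2, ?_⟩
      rw [Rs_union (k+1)]
      have h := Set.ncard_union_add_ncard_inter (fp '' Rs (k+1)) (fm '' Rs (k+1))
        ((Rs_finite (k+1)).image _) ((Rs_finite (k+1)).image _)
      rw [Rs_inter_succ k] at h
      have hinj : Function.Injective (fun p : ℤ × ℤ => (5*p.1, 5*p.2)) := by
        rintro ⟨a,b⟩ ⟨c,d⟩ hh
        simp only [Prod.mk.injEq] at hh
        ext <;> dsimp <;> omega
      rw [Set.ncard_image_of_injective _ fp_inj, Set.ncard_image_of_injective _ fm_inj,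
        Set.ncard_image_of_injective _ hinj, ih.1, ih.2] at h
      omega
  exact fun k => (key k).1

private def Ss (k : ℕ) : Set (ℤ × ℤ) := {p | p.1^2 + p.2^2 = 2 * 5^k}

private lemma Ss_finite (k : ℕ) : (Ss k).Finite := circle_finite _

private lemma Ss_eq_image (k : ℕ) :
    Ss k = (fun p : ℤ × ℤ => (p.1 - p.2, p.1 + p.2)) '' Rs k := by
  ext ⟨m, n⟩
  simp only [Ss, Set.mem_setOf_eq, Set.mem_image]
  constructor
  · intro h
    have he : Even (m + n) := by
      have h2 : Even (m^2 + n^2) := ⟨5^k, by linarith⟩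
      have hmm : Even (m^2) ↔ Even m := Int.even_pow.trans (by simp)
      have hnn : Even (n^2) ↔ Even n := Int.even_pow.trans (by simp)
      rcases Int.even_or_odd m with hm | hm
      · have : Even (n^2) := by
          rcases Int.even_add.mp h2 with hiff
          exact hiff.mp (hmm.mpr hm)
        exact Even.add hm (hnn.mp this)
      · have hno : ¬ Even (n^2) := by
          intro hcon
          exact (Int.even_add.mp h2 |>.mpr hcon) |> (fun he2 => (Int.not_even_iff_odd.mpr hm) (hmm.mp he2))
        have : Odd n := Int.not_even_iff_odd.mp (fun hc => hno (hnn.mpr hc))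
        exact Odd.add_odd hm this
    obtain ⟨t, ht⟩ := he
    refine ⟨(t, t - m), ?_, ?_⟩
    · simp only [Rs, Set.mem_setOf_eq]
      have h2 : (2:ℤ) * (t^2 + (t-m)^2) = 2 * 5^k := by
        have hn : n = 2*t - m := by omega
        subst hn
        linear_combination h
      exact mul_left_cancel₀ (by norm_num : (2:ℤ) ≠ 0) h2
    · simp only [Prod.mk.injEq]
      constructor <;> omega
  · rintro ⟨⟨a, b⟩, ha, heq⟩
    simp only [Rs, Set.mem_setOf_eq] at ha
    simp only [Prod.mk.injEq] at heq
    obtain ⟨h1, h2⟩ := heq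
    subst h1; subst h2
    linear_combination 2 * ha

private lemma ncard_Ss (k : ℕ) : (Ss k).ncard = 4 * (k + 1) := by
  rw [Ss_eq_image, Set.ncard_image_of_injective _ ?_, ncard_Rs]
  rintro ⟨a,b⟩ ⟨c,d⟩ h
  simp only [Prod.mk.injEq] at h
  ext <;> dsimp <;> omega

private lemma Ss_ne_zero {k : ℕ} {p : ℤ × ℤ} (hp : p ∈ Ss k) : p.1 ≠ 0 ∧ p.2 ≠ 0 := by
  obtain ⟨m, n⟩ := p
  simp only [Ss, Set.mem_setOf_eq] at hp
  have key : ∀ x : ℤ, x^2 ≠ 2 * 5^k := by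
    intro x hx
    have hev : Even (x^2) := ⟨5^k, by linarith⟩
    have hx2 : Even x := by
      rcases Int.even_or_odd x with h | h
      · exact h
      · exact absurd (hev) (by simpa [Int.even_pow] using Int.not_even_iff_odd.mpr h)
    obtain ⟨t, rfl⟩ := hx2
    have h5 : Even ((5:ℤ)^k) := ⟨t^2, by linarith⟩
    have : Odd ((5:ℤ)^k) := Odd.pow (by decide)
    exact (Int.not_odd_iff_even.mpr h5) this
  constructor
  · rintro rfl
    exact key n (by dsimp at hp; linarith)
  · rintro rfl
    exact key m (by dsimp at hp; linarith)

/-- the positive-quadrant part of `Ss k` -/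
private def Qs (k : ℕ) : Set (ℤ × ℤ) := {p | 1 ≤ p.1 ∧ 1 ≤ p.2 ∧ p.1^2 + p.2^2 = 2 * 5^k}

private lemma ncard_Qs (k : ℕ) : (Qs k).ncard = k + 1 := by
  -- partition Ss k into four quadrant pieces, each in bijection with Qs k
  classical
  set Q1 := Qs k
  set Q2 := {p : ℤ × ℤ | p.1 ≤ -1 ∧ 1 ≤ p.2 ∧ p.1^2 + p.2^2 = 2 * 5^k}
  set Q3 := {p : ℤ × ℤ | p.1 ≤ -1 ∧ p.2 ≤ -1 ∧ p.1^2 + p.2^2 = 2 * 5^k}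
  set Q4 := {p : ℤ × ℤ | 1 ≤ p.1 ∧ p.2 ≤ -1 ∧ p.1^2 + p.2^2 = 2 * 5^k}
  have hsub1 : Q1 ⊆ Ss k := fun p hp => hp.2.2
  have hsub2 : Q2 ⊆ Ss k := fun p hp => hp.2.2
  have hsub3 : Q3 ⊆ Ss k := fun p hp => hp.2.2
  have hsub4 : Q4 ⊆ Ss k := fun p hp => hp.2.2
  have hQ2 : Q2 = (fun p : ℤ × ℤ => (-p.2, p.1)) '' Q1 := by
    ext ⟨x, y⟩
    simp only [Set.mem_setOf_eq, Set.mem_image, Q1, Q2, Qs]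
    constructor
    · rintro ⟨h1, h2, h3⟩
      exact ⟨(y, -x), ⟨h2, by omega, by linear_combination h3⟩, by simp⟩
    · rintro ⟨⟨a, b⟩, ⟨h1, h2, h3⟩, heq⟩
      simp only [Prod.mk.injEq] at heq
      obtain ⟨e1, e2⟩ := heq
      subst e1; subst e2
      exact ⟨by omega, h1, by linear_combination h3⟩
  have hQ3 : Q3 = (fun p : ℤ × ℤ => (-p.1, -p.2)) '' Q1 := by
    ext ⟨x, y⟩
    simp only [Set.mem_setOf_eq, Set.mem_image, Q1, Q3, Qs]
    constructor
    · rintro ⟨h1, h2, h3⟩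
      exact ⟨(-x, -y), ⟨by omega, by omega, by linear_combination h3⟩, by simp⟩
    · rintro ⟨⟨a, b⟩, ⟨h1, h2, h3⟩, heq⟩
      simp only [Prod.mk.injEq] at heq
      obtain ⟨e1, e2⟩ := heq
      subst e1; subst e2
      exact ⟨by omega, by omega, by linear_combination h3⟩
  have hQ4 : Q4 = (fun p : ℤ × ℤ => (p.2, -p.1)) '' Q1 := by
    ext ⟨x, y⟩
    simp only [Set.mem_setOf_eq, Set.mem_image, Q1, Q4, Qs]
    constructor
    · rintro ⟨h1, h2, h3⟩
      exact ⟨(-y, x), ⟨by omega, h1, by linear_combination h3⟩, by simp⟩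
    · rintro ⟨⟨a, b⟩, ⟨h1, h2, h3⟩, heq⟩
      simp only [Prod.mk.injEq] at heq
      obtain ⟨e1, e2⟩ := heq
      subst e1; subst e2
      exact ⟨h2, by omega, by linear_combination h3⟩
  have hpart : Ss k = (Q1 ∪ Q2) ∪ (Q3 ∪ Q4) := by
    ext ⟨x, y⟩
    constructor
    · intro hp
      have hne := Ss_ne_zero hp
      have h3 := hp
      simp only [Ss, Set.mem_setOf_eq] at h3
      simp only [Set.mem_union, Set.mem_setOf_eq, Q1, Q2, Q3, Q4, Qs]
      dsimp at hne
      rcases lt_or_gt_of_ne hne.1 with hx | hx <;> rcases lt_or_gt_of_ne hne.2 with hy | hy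
      · exact Or.inr (Or.inl ⟨by omega, by omega, h3⟩)
      · exact Or.inl (Or.inr ⟨by omega, by omega, h3⟩)
      · exact Or.inr (Or.inr ⟨by omega, by omega, h3⟩)
      · exact Or.inl (Or.inl ⟨by omega, by omega, h3⟩)
    · intro hp
      rcases hp with (h | h) | (h | h)
      · exact hsub1 h
      · exact hsub2 h
      · exact hsub3 h
      · exact hsub4 h
  have hfin1 : Q1.Finite := (Ss_finite k).subset hsub1
  have hfin2 : Q2.Finite := (Ss_finite k).subset hsub2
  have hfin3 : Q3.Finite := (Ss_finite k).subset hsub3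
  have hfin4 : Q4.Finite := (Ss_finite k).subset hsub4
  have hd12 : Disjoint Q1 Q2 := by
    rw [Set.disjoint_left]
    rintro ⟨x, y⟩ h1 h2
    have := h1.1; have := h2.1; dsimp at *; omega
  have hd34 : Disjoint Q3 Q4 := by
    rw [Set.disjoint_left]
    rintro ⟨x, y⟩ h1 h2
    have := h1.1; have := h2.1; dsimp at *; omega
  have hdU : Disjoint (Q1 ∪ Q2) (Q3 ∪ Q4) := by
    rw [Set.disjoint_left]
    rintro ⟨x, y⟩ h1 h2
    have hy1 : 1 ≤ y := by rcases h1 with h | h; exacts [h.2.1, h.2.1]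
    have hy2 : y ≤ -1 := by rcases h2 with h | h; exacts [h.2.1, h.2.1]
    omega
  have hinj2 : Function.Injective (fun p : ℤ × ℤ => (-p.2, p.1)) := by
    rintro ⟨a,b⟩ ⟨c,d⟩ h; simp only [Prod.mk.injEq] at h; ext <;> dsimp <;> omega
  have hinj3 : Function.Injective (fun p : ℤ × ℤ => (-p.1, -p.2)) := by
    rintro ⟨a,b⟩ ⟨c,d⟩ h; simp only [Prod.mk.injEq] at h; ext <;> dsimp <;> omega
  have hinj4 : Function.Injective (fun p : ℤ × ℤ => (p.2, -p.1)) := by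
    rintro ⟨a,b⟩ ⟨c,d⟩ h; simp only [Prod.mk.injEq] at h; ext <;> dsimp <;> omega
  have hc2 : Q2.ncard = Q1.ncard := by rw [hQ2, Set.ncard_image_of_injective _ hinj2]
  have hc3 : Q3.ncard = Q1.ncard := by rw [hQ3, Set.ncard_image_of_injective _ hinj3]
  have hc4 : Q4.ncard = Q1.ncard := by rw [hQ4, Set.ncard_image_of_injective _ hinj4]
  have htot : (Ss k).ncard = 4 * Q1.ncard := by
    rw [hpart, Set.ncard_union_eq hdU (hfin1.union hfin2) (hfin3.union hfin4),
      Set.ncard_union_eq hd12 hfin1 hfin2, Set.ncard_union_eq hd34 hfin3 hfin4,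
      hc2, hc3, hc4]
    ring
  have := ncard_Ss k
  rw [htot] at this
  omega

private lemma ncard_nat_pairs (k : ℕ) :
    ({p : ℕ × ℕ | 1 ≤ p.1 ∧ 1 ≤ p.2 ∧ p.1^2 + p.2^2 = 2 * 5^k}).ncard = k + 1 := by
  have himg : (fun p : ℕ × ℕ => ((p.1 : ℤ), (p.2 : ℤ))) ''
      {p : ℕ × ℕ | 1 ≤ p.1 ∧ 1 ≤ p.2 ∧ p.1^2 + p.2^2 = 2 * 5^k} = Qs k := by
    ext ⟨x, y⟩
    simp only [Set.mem_image, Set.mem_setOf_eq, Qs, Prod.mk.injEq]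
    constructor
    · rintro ⟨⟨a, b⟩, ⟨h1, h2, h3⟩, e1, e2⟩
      subst e1; subst e2
      refine ⟨by exact_mod_cast h1, by exact_mod_cast h2, ?_⟩
      exact_mod_cast congrArg (fun t : ℕ => (t : ℤ)) h3
    · rintro ⟨h1, h2, h3⟩
      refine ⟨(x.toNat, y.toNat), ⟨?_, ?_, ?_⟩, ?_, ?_⟩
      · omega
      · omega
      · have hx : (x.toNat : ℤ) = x := by omega
        have hy : (y.toNat : ℤ) = y := by omega
        have : ((x.toNat^2 + y.toNat^2 : ℕ) : ℤ) = ((2 * 5^k : ℕ) : ℤ) := by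
          push_cast
          rw [hx, hy]
          push_cast at h3 ⊢
          linarith
        exact_mod_cast this
      · omega
      · omega
  have hinj : Function.Injective (fun p : ℕ × ℕ => ((p.1 : ℤ), (p.2 : ℤ))) := by
    rintro ⟨a,b⟩ ⟨c,d⟩ h; simp only [Prod.mk.injEq] at h; ext <;> dsimp <;> omega
  rw [← ncard_Qs k, ← himg, Set.ncard_image_of_injective _ hinj]

private lemma ncard_Icc_nat (a b : ℕ) : (Set.Icc a b).ncard = b + 1 - a := by
  rw [← Finset.coe_Icc, Set.ncard_coe_finset, Nat.card_Icc]

private lemma downward_eq_Icc (S : Set ℕ) (hfin : S.Finite)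
    (h1 : ∀ n ∈ S, 1 ≤ n)
    (hdc : ∀ j k : ℕ, 1 ≤ j → j ≤ k → k ∈ S → j ∈ S) :
    S = Set.Icc 1 S.ncard := by
  rcases S.eq_empty_or_nonempty with h | h
  · rw [h]; simp
  · have hne : hfin.toFinset.Nonempty := by
      simpa [Set.Finite.toFinset_nonempty] using h
    set M := hfin.toFinset.max' hne with hM
    have hMS : M ∈ S := by
      have := hfin.toFinset.max'_mem hne
      simpa using this
    have hSeq : S = Set.Icc 1 M := by
      ext n
      simp only [Set.mem_Icc]
      constructor
      · intro hn
        refine ⟨h1 n hn, ?_⟩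
        exact hfin.toFinset.le_max' n (by simpa using hn)
      · rintro ⟨hn1, hn2⟩
        exact hdc n M hn1 hn2 hMS
    have : S.ncard = M := by rw [hSeq, ncard_Icc_nat]; omega
    rw [this, ← hSeq]

private lemma lattice_set_finite (t : ℕ) :
    {p : ℕ × ℕ | 1 ≤ p.1 ∧ 1 ≤ p.2 ∧ p.1^2 + p.2^2 ≤ t}.Finite := by
  apply Set.Finite.subset ((Set.finite_Icc 1 t).prod (Set.finite_Icc 1 t))
  rintro ⟨x, y⟩ ⟨h1, h2, h3⟩
  have hx : x ≤ x^2 := Nat.le_self_pow (by norm_num) x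
  have hy : y ≤ y^2 := Nat.le_self_pow (by norm_num) y
  constructor <;> simp only [Set.mem_Icc] <;> constructor <;> first | assumption | nlinarith

theorem stmt_14 (lam : ℕ → ℝ)
    (hmono : ∀ j k : ℕ, 1 ≤ j → j ≤ k → lam j ≤ lam k)
    (hcount : ∀ Γ : ℝ, ({k : ℕ | 1 ≤ k ∧ lam k ≤ Γ}).ncard =
      ({p : ℕ × ℕ | 1 ≤ p.1 ∧ 1 ≤ p.2 ∧
        π ^ 2 * ((p.1 : ℝ) ^ 2 + (p.2 : ℝ) ^ 2) ≤ Γ}).ncard) :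
    ∀ N : ℕ, 1 ≤ N → ∃ k : ℕ, 1 ≤ k ∧
      ({ℓ : ℕ | 1 ≤ ℓ ∧ lam ℓ = lam k}).ncard = N := by
  intro N hN
  have hpi : (0:ℝ) < π ^ 2 := by positivity
  set s : ℕ := 2 * 5 ^ (N - 1) with hs
  have hs2 : 2 ≤ s := by
    have : 1 ≤ 5 ^ (N-1) := Nat.one_le_pow _ _ (by norm_num)
    omega
  -- the lattice sets
  set Ple : Set (ℕ × ℕ) := {p | 1 ≤ p.1 ∧ 1 ≤ p.2 ∧ p.1^2 + p.2^2 ≤ s} with hPle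
  set Plt : Set (ℕ × ℕ) := {p | 1 ≤ p.1 ∧ 1 ≤ p.2 ∧ p.1^2 + p.2^2 ≤ s - 1} with hPlt
  set Peq : Set (ℕ × ℕ) := {p | 1 ≤ p.1 ∧ 1 ≤ p.2 ∧ p.1^2 + p.2^2 = s} with hPeq
  have hPle_fin : Ple.Finite := lattice_set_finite s
  have hPlt_fin : Plt.Finite := lattice_set_finite (s-1)
  have hPeq_fin : Peq.Finite := hPle_fin.subset (by rintro ⟨x,y⟩ ⟨a,b,c⟩; exact ⟨a,b,c.le⟩)
  have hPeq_card : Peq.ncard = N := by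
    have h := ncard_nat_pairs (N - 1)
    rw [hPeq, hs, h]
    omega
  -- split Ple into Plt and Peq
  have hsplit : Ple = Plt ∪ Peq := by
    ext ⟨x, y⟩
    simp only [hPle, hPlt, hPeq, Set.mem_setOf_eq, Set.mem_union]
    omega
  have hdisj : Disjoint Plt Peq := by
    rw [Set.disjoint_left]
    rintro ⟨x, y⟩ h1 h2
    have := h1.2.2; have := h2.2.2
    omega
  have hPle_card : Ple.ncard = Plt.ncard + Peq.ncard := by
    rw [hsplit, Set.ncard_union_eq hdisj hPlt_fin hPeq_fin]
  set a : ℕ := Plt.ncard with ha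
  -- the two thresholds
  set G : ℝ := π ^ 2 * s with hG
  set G' : ℝ := π ^ 2 * ((s : ℝ) - 1/2) with hG'
  -- identify the real lattice sets at the two thresholds
  have hle_iff : ∀ x : ℕ, (π ^ 2 * (x : ℝ) ≤ G ↔ x ≤ s) := by
    intro x
    rw [hG, mul_le_mul_iff_right₀ hpi]
    exact_mod_cast Iff.rfl
  have hlt_iff : ∀ x : ℕ, (π ^ 2 * (x : ℝ) ≤ G' ↔ x ≤ s - 1) := by
    intro x
    rw [hG', mul_le_mul_iff_right₀ hpi]
    constructor
    · intro h
      have : (x : ℝ) < s := by linarith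
      have : x < s := by exact_mod_cast this
      omega
    · intro h
      have : (x : ℝ) ≤ (s : ℝ) - 1 := by
        have : (x : ℝ) ≤ ((s - 1 : ℕ) : ℝ) := by exact_mod_cast h
        rw [Nat.cast_sub (by omega)] at this
        simpa using this
      linarith
  have hGset : {p : ℕ × ℕ | 1 ≤ p.1 ∧ 1 ≤ p.2 ∧
      π ^ 2 * ((p.1 : ℝ) ^ 2 + (p.2 : ℝ) ^ 2) ≤ G} = Ple := by
    ext ⟨x, y⟩
    simp only [Set.mem_setOf_eq, hPle]
    have := hle_iff (x^2 + y^2)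
    push_cast at this
    rw [this]
  have hG'set : {p : ℕ × ℕ | 1 ≤ p.1 ∧ 1 ≤ p.2 ∧
      π ^ 2 * ((p.1 : ℝ) ^ 2 + (p.2 : ℝ) ^ 2) ≤ G'} = Plt := by
    ext ⟨x, y⟩
    simp only [Set.mem_setOf_eq, hPlt]
    have := hlt_iff (x^2 + y^2)
    push_cast at this
    rw [this]
  -- the lam counting sets
  set Sle : Set ℕ := {k | 1 ≤ k ∧ lam k ≤ G} with hSle
  set Slt : Set ℕ := {k | 1 ≤ k ∧ lam k ≤ G'} with hSlt
  have hcG : Sle.ncard = a + N := by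
    rw [hSle, hcount G, hGset, hPle_card, hPeq_card]
  have hcG' : Slt.ncard = a := by
    rw [hSlt, hcount G', hG'set]
  -- finiteness of Sle
  have hSle_fin : Sle.Finite := by
    rw [← Set.not_infinite]
    intro hinf
    have h0 : Sle.ncard = 0 := hinf.ncard
    omega
  have hG'G : G' ≤ G := by
    rw [hG, hG']
    apply mul_le_mul_of_nonneg_left _ hpi.le
    linarith
  have hsub : Slt ⊆ Sle := by
    rintro ℓ ⟨h1, h2⟩
    exact ⟨h1, le_trans h2 hG'G⟩
  have hSlt_fin : Slt.Finite := hSle_fin.subset hsub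
  -- both counting sets are initial segments
  have hSle_Icc : Sle = Set.Icc 1 (a + N) := by
    have := downward_eq_Icc Sle hSle_fin (fun n hn => hn.1)
      (fun j k hj hjk hk => ⟨hj, le_trans (hmono j k hj hjk) hk.2⟩)
    rwa [hcG] at this
  have hSlt_Icc : Slt = Set.Icc 1 a := by
    have := downward_eq_Icc Slt hSlt_fin (fun n hn => hn.1)
      (fun j k hj hjk hk => ⟨hj, le_trans (hmono j k hj hjk) hk.2⟩)
    rwa [hcG'] at this
  -- the block a+1 .. a+N has constant lam value
  have hblock_le : lam (a + N) ≤ G := by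
    have : (a + N) ∈ Sle := by rw [hSle_Icc]; simp only [Set.mem_Icc]; omega
    exact this.2
  have hblock_gt : G' < lam (a + 1) := by
    by_contra hcon
    push_neg at hcon
    have : (a + 1) ∈ Slt := ⟨by omega, hcon⟩
    rw [hSlt_Icc] at this
    simp only [Set.mem_Icc] at this
    omega
  have hconst : lam (a + 1) = lam (a + N) := by
    refine le_antisymm (hmono _ _ (by omega) (by omega)) ?_
    by_contra hcon
    push_neg at hcon
    -- lam (a+1) < lam (a+N) ≤ G, so Γ' := lam (a+1) < G
    have hG'lt : lam (a + 1) < G := lt_of_lt_of_le hcon hblock_le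
    have hkey := hcount (lam (a + 1))
    -- LHS ≥ a + 1
    have hlhs_sub : Set.Icc 1 (a+1) ⊆ {k | 1 ≤ k ∧ lam k ≤ lam (a + 1)} := by
      rintro ℓ hℓ
      simp only [Set.mem_Icc] at hℓ
      exact ⟨hℓ.1, hmono _ _ hℓ.1 hℓ.2⟩
    have hlhs_fin : {k | 1 ≤ k ∧ lam k ≤ lam (a + 1)}.Finite := by
      apply hSle_fin.subset
      rintro ℓ ⟨h1, h2⟩
      exact ⟨h1, le_trans h2 hG'lt.le⟩
    have hlhs_ge : a + 1 ≤ ({k : ℕ | 1 ≤ k ∧ lam k ≤ lam (a + 1)}).ncard := by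
      have := Set.ncard_le_ncard hlhs_sub hlhs_fin
      rwa [ncard_Icc_nat, Nat.add_sub_cancel] at this
    -- RHS ≤ a
    have hrhs_sub : {p : ℕ × ℕ | 1 ≤ p.1 ∧ 1 ≤ p.2 ∧
        π ^ 2 * ((p.1 : ℝ) ^ 2 + (p.2 : ℝ) ^ 2) ≤ lam (a + 1)} ⊆ Plt := by
      rintro ⟨x, y⟩ ⟨h1, h2, h3⟩
      refine ⟨h1, h2, ?_⟩
      have hlt : π ^ 2 * (((x^2 + y^2 : ℕ) : ℝ)) < G := by
        push_cast
        calc π ^ 2 * ((x:ℝ)^2 + (y:ℝ)^2) ≤ lam (a+1) := h3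
        _ < G := hG'lt
      rw [hG, mul_lt_mul_iff_right₀ hpi] at hlt
      have : x^2 + y^2 < s := by exact_mod_cast hlt
      show x ^ 2 + y ^ 2 ≤ s - 1
      omega
    have hrhs_le : ({p : ℕ × ℕ | 1 ≤ p.1 ∧ 1 ≤ p.2 ∧
        π ^ 2 * ((p.1 : ℝ) ^ 2 + (p.2 : ℝ) ^ 2) ≤ lam (a + 1)}).ncard ≤ a := by
      have := Set.ncard_le_ncard hrhs_sub hPlt_fin
      omega
    omega
  -- conclude
  refine ⟨a + 1, by omega, ?_⟩
  have hfinal : {ℓ : ℕ | 1 ≤ ℓ ∧ lam ℓ = lam (a + 1)} = Set.Icc (a + 1) (a + N) := by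
    ext ℓ
    simp only [Set.mem_setOf_eq, Set.mem_Icc]
    constructor
    · rintro ⟨h1, h2⟩
      have hin : ℓ ∈ Sle := ⟨h1, by rw [h2, hconst]; exact hblock_le⟩
      have hnin : ℓ ∉ Slt := by
        rintro ⟨-, hc⟩
        rw [h2] at hc
        exact absurd hc (not_le.mpr hblock_gt)
      rw [hSle_Icc] at hin
      rw [hSlt_Icc] at hnin
      simp only [Set.mem_Icc] at hin hnin
      omega
    · rintro ⟨h1, h2⟩
      refine ⟨by omega, le_antisymm ?_ (hmono _ _ (by omega) h1)⟩
      calc lam ℓ ≤ lam (a + N) := hmono _ _ (by omega) h2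
      _ = lam (a + 1) := hconst.symm
  rw [hfinal, ncard_Icc_nat]
  omega
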